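/- arXiv:1702.08499 — 3 statements merged into one kernel-verified Lean document; each statement's English description precedes it below -/
import Mathlib

section
/- Let $f:\mathbb{R}\to\mathbb{R}$ be bounded and uniformly continuous, and define $S_t(f)(x) = \frac{1}{\sqrt{2\pi}} \int_{-\infty}^{+\infty} f(x-v) \cdot \frac{v^2 e^{-v^2/(2t^2)}}{t^3}\, dv$ for $t>0$, $x \in \mathbb{R}$. Then for every $x \in \mathbb{R}$, $\lim_{t \searrow 0} S_t(f)(x) = f(x)$. -/
open MeasureTheory Filter

/-- The Maxwell–Boltzmann convolution operator. -/
noncomputable def maxwellConv (f : ℝ → ℝ) (t x : ℝ) : ℝ :=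
  (1 / Real.sqrt (2 * Real.pi)) *
    ∫ v : ℝ, f (x - v) * (v ^ 2 * Real.exp (-v ^ 2 / (2 * t ^ 2)) / t ^ 3)

lemma integrable_sq_mul_exp : Integrable (fun u : ℝ => u ^ 2 * Real.exp (-(1/2) * u ^ 2)) := by
  have := integrable_rpow_mul_exp_neg_mul_sq (b := (1:ℝ)/2) (by norm_num)
    (s := (2:ℝ)) (by norm_num)
  refine this.congr (Filter.Eventually.of_forall fun u => ?_)
  norm_num [Real.rpow_natCast, Real.rpow_two]

lemma exp_half_rw (u : ℝ) : Real.exp (-u ^ 2 / 2) = Real.exp (-(1/2) * u ^ 2) := by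
  ring_nf

lemma deriv_neg_exp (u : ℝ) :
    HasDerivAt (fun y : ℝ => -Real.exp (-(1/2) * y ^ 2)) (u * Real.exp (-(1/2) * u ^ 2)) u := by
  have h1 : HasDerivAt (fun y : ℝ => -(1/2) * y ^ 2) (-(1/2) * (2 * u)) u := by
    exact ((hasDerivAt_pow 2 u).const_mul _).congr_deriv (by ring_nf)
  have h2 := (h1.exp).neg
  exact h2.congr_deriv (by ring)

lemma gauss_second_moment :
    ∫ u : ℝ, u ^ 2 * Real.exp (-(1/2) * u ^ 2) = Real.sqrt (2 * Real.pi) := by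
  have hu : ∀ u : ℝ, HasDerivAt (fun y : ℝ => y) 1 u := fun u => hasDerivAt_id u
  have key := integral_mul_deriv_eq_deriv_mul_of_integrable
    (u := fun y : ℝ => y) (u' := fun _ => (1:ℝ))
    (v := fun y : ℝ => -Real.exp (-(1/2) * y ^ 2))
    (v' := fun y : ℝ => y * Real.exp (-(1/2) * y ^ 2))
    (fun u _ => hu u) (fun u _ => deriv_neg_exp u)
    (by
      refine integrable_sq_mul_exp.congr (Filter.Eventually.of_forall fun u => ?_)
      simp [Pi.mul_apply]
      try ring)
    (by
      have : Integrable (fun u : ℝ => Real.exp (-(1/2) * u ^ 2)) :=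
        integrable_exp_neg_mul_sq (by norm_num)
      refine this.neg.congr (Filter.Eventually.of_forall fun u => ?_)
      simp [Pi.mul_apply]
      try ring)
    (by
      have : Integrable (fun u : ℝ => u * Real.exp (-(1/2) * u ^ 2)) :=
        integrable_mul_exp_neg_mul_sq (by norm_num)
      refine this.neg.congr (Filter.Eventually.of_forall fun u => ?_)
      simp [Pi.mul_apply]
      try ring)
  have h1 : (∫ u : ℝ, u ^ 2 * Real.exp (-(1/2) * u ^ 2))
      = ∫ u : ℝ, u * (u * Real.exp (-(1/2) * u ^ 2)) := by
    congr 1; funext u; ring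
  have h2 : (∫ u : ℝ, (1:ℝ) * (-Real.exp (-(1/2) * u ^ 2)))
      = -∫ u : ℝ, Real.exp (-(1/2) * u ^ 2) := by
    rw [← integral_neg]; congr 1; funext u; ring
  have h3 : (∫ u : ℝ, Real.exp (-(1/2) * u ^ 2)) = Real.sqrt (2 * Real.pi) := by
    rw [integral_gaussian]
    congr 1
    rw [div_div_eq_mul_div, div_one]
    ring
  rw [h1, key, h2, h3, neg_neg]

theorem maxwell_boltzmann_limit
    (f : ℝ → ℝ)
    (hf_bdd : ∃ M : ℝ, ∀ x : ℝ, |f x| ≤ M)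
    (hf_uc : UniformContinuous f) :
    ∀ x : ℝ, Tendsto (fun t : ℝ => maxwellConv f t x)
      (nhdsWithin 0 (Set.Ioi 0)) (nhds (f x)) := by
  intro x
  obtain ⟨M, hM⟩ := hf_bdd
  have hfc : Continuous f := hf_uc.continuous
  -- Step 1: rescaled formula for t > 0
  have hscale : ∀ t : ℝ, 0 < t →
      (∫ v : ℝ, f (x - v) * (v ^ 2 * Real.exp (-v ^ 2 / (2 * t ^ 2)) / t ^ 3))
        = ∫ u : ℝ, f (x - t * u) * (u ^ 2 * Real.exp (-(1/2) * u ^ 2)) := by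
    intro t ht
    have key := MeasureTheory.Measure.integral_comp_mul_left
      (g := fun v : ℝ => f (x - v) * (v ^ 2 * Real.exp (-v ^ 2 / (2 * t ^ 2)) / t ^ 3)) t
    symm
    calc ∫ u : ℝ, f (x - t * u) * (u ^ 2 * Real.exp (-(1/2) * u ^ 2))
        = ∫ u : ℝ, t * (f (x - t * u) *
            ((t * u) ^ 2 * Real.exp (-(t * u) ^ 2 / (2 * t ^ 2)) / t ^ 3)) := by
          congr 1
          funext u
          have harg : -(t * u) ^ 2 / (2 * t ^ 2) = -(1/2) * u ^ 2 := by
            field_simp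
          rw [harg]
          field_simp
      _ = t * ∫ u : ℝ, f (x - t * u) *
            ((t * u) ^ 2 * Real.exp (-(t * u) ^ 2 / (2 * t ^ 2)) / t ^ 3) :=
          integral_const_mul _ _
      _ = t * (|t⁻¹| • ∫ v : ℝ, f (x - v) *
            (v ^ 2 * Real.exp (-v ^ 2 / (2 * t ^ 2)) / t ^ 3)) := by rw [key]
      _ = ∫ v : ℝ, f (x - v) * (v ^ 2 * Real.exp (-v ^ 2 / (2 * t ^ 2)) / t ^ 3) := by
          rw [abs_of_pos (inv_pos.mpr ht), smul_eq_mul, ← mul_assoc,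
            mul_inv_cancel₀ ht.ne', one_mul]
  -- Step 2: dominated convergence on the rescaled integral
  have hlim : Tendsto
      (fun t : ℝ => ∫ u : ℝ, f (x - t * u) * (u ^ 2 * Real.exp (-(1/2) * u ^ 2)))
      (nhdsWithin 0 (Set.Ioi 0))
      (nhds (∫ u : ℝ, f x * (u ^ 2 * Real.exp (-(1/2) * u ^ 2)))) := by
    have hM0 : 0 ≤ M := le_trans (abs_nonneg _) (hM 0)
    refine tendsto_integral_filter_of_dominated_convergence
      (fun u => M * (u ^ 2 * Real.exp (-(1/2) * u ^ 2))) ?_ ?_ ?_ ?_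
    · filter_upwards with t
      exact Continuous.aestronglyMeasurable (by fun_prop)
    · filter_upwards with t
      filter_upwards with u
      rw [norm_mul, Real.norm_eq_abs, Real.norm_eq_abs,
        abs_of_nonneg (show (0:ℝ) ≤ u ^ 2 * Real.exp (-(1/2) * u ^ 2) by positivity)]
      exact mul_le_mul_of_nonneg_right (hM _) (by positivity)
    · exact integrable_sq_mul_exp.const_mul M
    · filter_upwards with u
      have hcont : Tendsto (fun t : ℝ => f (x - t * u)) (nhds 0) (nhds (f x)) := by
        have : Tendsto (fun t : ℝ => x - t * u) (nhds 0) (nhds x) := by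
          have h := (tendsto_id (x := nhds (0:ℝ))).mul_const u
          simpa using (tendsto_const_nhds (x := x) (f := nhds (0:ℝ))).sub h
        exact (hfc.tendsto x).comp this
      exact ((hcont.mono_left nhdsWithin_le_nhds).mul_const _)
  -- Step 3: compute the limit value
  have hval : (∫ u : ℝ, f x * (u ^ 2 * Real.exp (-(1/2) * u ^ 2)))
      = f x * Real.sqrt (2 * Real.pi) := by
    rw [integral_const_mul, gauss_second_moment]
  have hsqrt : Real.sqrt (2 * Real.pi) ≠ 0 := by
    positivity
  have : Tendsto (fun t : ℝ =>
      (1 / Real.sqrt (2 * Real.pi)) *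
        ∫ u : ℝ, f (x - t * u) * (u ^ 2 * Real.exp (-(1/2) * u ^ 2)))
      (nhdsWithin 0 (Set.Ioi 0)) (nhds (f x)) := by
    have := hlim.const_mul (1 / Real.sqrt (2 * Real.pi))
    rw [hval] at this
    convert this using 2
    field_simp
  refine this.congr' ?_
  filter_upwards [self_mem_nhdsWithin] with t ht
  simp only [maxwellConv, hscale t ht]
end

section
/- Let $f:\mathbb{R}\to\mathbb{R}$ be bounded, uniformly continuous and integrable, and let $S_t(f)(x) = \frac{1}{\sqrt{2\pi}} \int_{-\infty}^{+\infty} f(x-v) \cdot \frac{v^2 e^{-v^2/(2t^2)}}{t^3}\, dv$. Then for every $t>0$ the Fourier transform of $x \mapsto S_t(f)(x)$ equals $\hat{f}(\xi)\, e^{-t^2\xi^2/2}\,(1 - t^2\xi^2)$ for all $\xi \in \mathbb{R}$, where $\hat{f}(\xi) = \frac{1}{\sqrt{2\pi}} \int_{-\infty}^{+\infty} f(x) e^{-i\xi x}\, dx$. -/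
open MeasureTheory Filter

/-- The Fourier transform `ĝ(ξ) = (2π)^{-1/2} ∫ g(x) e^{-iξx} dx` of a real function. -/
noncomputable def fourierXform (g : ℝ → ℝ) (ξ : ℝ) : ℂ :=
  (1 / (Real.sqrt (2 * Real.pi) : ℂ)) *
    ∫ x : ℝ, (g x : ℂ) * Complex.exp (-(Complex.I * ξ * x))

open Complex in
lemma mb_hasDeriv_phi (b c : ℂ) (v : ℝ) :
    HasDerivAt (fun v : ℝ => Complex.exp (-b * v^2 + c * v))
      ((-(2*b)*v + c) * Complex.exp (-b * v^2 + c * v)) v := by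
  have hz : HasDerivAt (fun z : ℂ => -b * z^2 + c * z) (-(2*b)*v + c) (v : ℂ) := by
    have h1 := (hasDerivAt_pow 2 (v:ℂ)).const_mul (-b)
    have h2 := (hasDerivAt_id (v:ℂ)).const_mul c
    exact (h1.add h2).congr_deriv (by ring)
  exact (hz.cexp).comp_ofReal.congr_deriv (mul_comm _ _)

lemma mb_hasDeriv_psi (b c : ℂ) (v : ℝ) :
    HasDerivAt (fun v : ℝ => (v:ℂ) * Complex.exp (-b * v^2 + c * v))
      (Complex.exp (-b * v^2 + c * v)
        + (v:ℂ) * ((-(2*b)*v + c) * Complex.exp (-b * v^2 + c * v))) v := by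
  have h1 : HasDerivAt (fun y : ℝ => (y:ℂ)) 1 v := Complex.ofRealCLM.hasDerivAt
  have := h1.mul (mb_hasDeriv_phi b c v)
  exact this.congr_deriv (by ring)

lemma mb_integrable_pow (b ξ : ℝ) (hb : 0 < b) (n : ℕ) (hn : n ≤ 2) :
    Integrable (fun v : ℝ => (v:ℂ)^n * Complex.exp (-(b:ℂ) * v^2 + (-(Complex.I*ξ)) * v)) := by
  have h0 : Integrable (fun v : ℝ => Real.exp (-b * v^2)) := integrable_exp_neg_mul_sq hb
  have h2 : Integrable (fun v : ℝ => v^2 * Real.exp (-b * v^2)) := by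
    simpa [Real.rpow_natCast _ 2] using
      integrable_rpow_mul_exp_neg_mul_sq hb (s := (2:ℝ)) (by norm_num)
  apply Integrable.mono' (h0.add h2)
  · apply Continuous.aestronglyMeasurable
    fun_prop
  · refine Filter.Eventually.of_forall fun v => ?_
    have hre : (-(b:ℂ) * v^2 + (-(Complex.I*ξ)) * v).re = -b * v^2 := by
      simp [Complex.add_re, Complex.mul_re, Complex.mul_im, ← Complex.ofReal_pow]
    rw [norm_mul, norm_pow, Complex.norm_real, Complex.norm_exp, hre]
    have hpos := Real.exp_pos (-b * v^2)
    have habs : ‖v‖^n ≤ 1 + v^2 := by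
      rcases Nat.lt_or_ge n 1 with h | h
      · interval_cases n
        · simp; nlinarith [sq_nonneg v]
      · interval_cases n
        · rw [Real.norm_eq_abs, pow_one]
          nlinarith [abs_nonneg v, _root_.sq_abs v, sq_nonneg (|v| - 1)]
        · rw [Real.norm_eq_abs, _root_.sq_abs]
          nlinarith
    calc ‖v‖^n * Real.exp (-b * v^2) ≤ (1 + v^2) * Real.exp (-b * v^2) :=
          mul_le_mul_of_nonneg_right habs hpos.le
      _ = Real.exp (-b * v^2) + v^2 * Real.exp (-b * v^2) := by ring

lemma mb_moment2 (b ξ : ℝ) (hb : 0 < b) :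
    ∫ v : ℝ, (v:ℂ)^2 * Complex.exp (-(b:ℂ)*v^2 + (-(Complex.I*ξ))*v)
      = (1/(2*b) + (-(Complex.I*ξ))^2/(4*(b:ℂ)^2))
        * ∫ v : ℝ, Complex.exp (-(b:ℂ)*v^2 + (-(Complex.I*ξ))*v) := by
  set c : ℂ := -(Complex.I*ξ) with hc
  set φ : ℝ → ℂ := fun v => Complex.exp (-(b:ℂ)*v^2 + c*v) with hφ
  have i0 : Integrable φ := by
    simpa [hφ, hc, neg_mul, mul_assoc] using mb_integrable_pow b ξ hb 0 (by norm_num)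
  have i1 : Integrable (fun v : ℝ => (v:ℂ) * φ v) := by
    simpa [hφ, hc, neg_mul, mul_assoc, pow_one] using mb_integrable_pow b ξ hb 1 (by norm_num)
  have i2 : Integrable (fun v : ℝ => (v:ℂ)^2 * φ v) := by
    simpa [hφ, hc, neg_mul, mul_assoc] using mb_integrable_pow b ξ hb 2 (by norm_num)
  have eq1 : (fun v : ℝ => (-(2*(b:ℂ))*v + c) * φ v)
      = fun v : ℝ => (-(2*(b:ℂ))) * ((v:ℂ) * φ v) + c * φ v := funext fun v => by ring
  have d1 : Integrable (fun v : ℝ => (-(2*(b:ℂ))*v + c) * φ v) := by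
    rw [eq1]; exact (i1.const_mul _).add (i0.const_mul _)
  have E1 : ∫ v : ℝ, (-(2*(b:ℂ))*v + c) * φ v = 0 :=
    integral_eq_zero_of_hasDerivAt_of_integrable
      (fun v => mb_hasDeriv_phi (b:ℂ) c v) d1 i0
  have E1' : (-(2*(b:ℂ))) * (∫ v : ℝ, (v:ℂ) * φ v) + c * (∫ v : ℝ, φ v) = 0 := by
    rw [eq1] at E1
    rw [integral_add (i1.const_mul _) (i0.const_mul _),
      integral_const_mul, integral_const_mul] at E1
    exact E1
  have eq2 : (fun v : ℝ => φ v + (v:ℂ) * ((-(2*(b:ℂ))*v + c) * φ v))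
      = fun v : ℝ => φ v + (c * ((v:ℂ) * φ v) + (-(2*(b:ℂ))) * ((v:ℂ)^2 * φ v)) :=
    funext fun v => by ring
  have d2 : Integrable (fun v : ℝ => φ v + (v:ℂ) * ((-(2*(b:ℂ))*v + c) * φ v)) := by
    rw [eq2]; exact i0.add ((i1.const_mul _).add (i2.const_mul _))
  have E2 : ∫ v : ℝ, (φ v + (v:ℂ) * ((-(2*(b:ℂ))*v + c) * φ v)) = 0 :=
    integral_eq_zero_of_hasDerivAt_of_integrable
      (fun v => mb_hasDeriv_psi (b:ℂ) c v) d2 i1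
  have E2' : (∫ v : ℝ, φ v) + (c * (∫ v : ℝ, (v:ℂ) * φ v)
      + (-(2*(b:ℂ))) * (∫ v : ℝ, (v:ℂ)^2 * φ v)) = 0 := by
    have i12 : Integrable (fun v : ℝ => c * ((v:ℂ) * φ v)
        + (-(2*(b:ℂ))) * ((v:ℂ)^2 * φ v)) := (i1.const_mul _).add (i2.const_mul _)
    rw [eq2] at E2
    rw [integral_add i0 i12,
      integral_add (i1.const_mul _) (i2.const_mul _),
      integral_const_mul, integral_const_mul] at E2
    exact E2
  set J0 := ∫ v : ℝ, φ v with hJ0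
  set J1 := ∫ v : ℝ, (v:ℂ) * φ v with hJ1
  set J2 := ∫ v : ℝ, (v:ℂ)^2 * φ v with hJ2
  have hb' : (b:ℂ) ≠ 0 := Complex.ofReal_ne_zero.mpr hb.ne'
  have key : (4*(b:ℂ)^2) * J2 = (2*(b:ℂ)) * J0 + c^2 * J0 := by
    linear_combination (-2*(b:ℂ)) * E2' + (-c) * E1'
  calc J2 = ((4*(b:ℂ)^2) * J2) / (4*(b:ℂ)^2) := by field_simp
    _ = ((2*(b:ℂ))*J0 + c^2*J0)/(4*(b:ℂ)^2) := by rw [key]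
    _ = (1/(2*(b:ℂ)) + c^2/(4*(b:ℂ)^2)) * J0 := by field_simp; ring

lemma mb_kernel_ft (t : ℝ) (ht : 0 < t) (ξ : ℝ) :
    ∫ v : ℝ, ((v ^ 2 * Real.exp (-v ^ 2 / (2 * t ^ 2)) / t ^ 3 : ℝ) : ℂ)
        * Complex.exp (-(Complex.I * ξ * v))
      = (Real.sqrt (2 * Real.pi) : ℂ)
        * ((Real.exp (-t ^ 2 * ξ ^ 2 / 2) * (1 - t ^ 2 * ξ ^ 2) : ℝ) : ℂ) := by
  have ht' : (t:ℝ) ≠ 0 := ht.ne'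
  have htC : (t:ℂ) ≠ 0 := Complex.ofReal_ne_zero.mpr ht'
  set b : ℝ := 1/(2*t^2) with hbdef
  have hb : 0 < b := by positivity
  have hbC : (b:ℂ) ≠ 0 := Complex.ofReal_ne_zero.mpr hb.ne'
  have hpt : ∀ v : ℝ, ((v ^ 2 * Real.exp (-v ^ 2 / (2 * t ^ 2)) / t ^ 3 : ℝ) : ℂ)
        * Complex.exp (-(Complex.I * ξ * v))
      = (1/(t:ℂ)^3) * ((v:ℂ)^2 * Complex.exp (-(b:ℂ)*v^2 + (-(Complex.I*ξ))*v)) := by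
    intro v
    rw [show (-(b:ℂ)*v^2 + (-(Complex.I*ξ))*v)
        = ((-v ^ 2 / (2 * t ^ 2) : ℝ) : ℂ) + (-(Complex.I * ξ * v)) by
      push_cast [hbdef]; field_simp]
    rw [Complex.exp_add, ← Complex.ofReal_exp]
    push_cast
    ring
  simp_rw [hpt, integral_const_mul, mb_moment2 b ξ hb]
  have hJ0 : ∫ v : ℝ, Complex.exp (-(b:ℂ)*v^2 + (-(Complex.I*ξ))*v)
      = ((Real.sqrt (2*Real.pi) * t : ℝ) : ℂ)
        * Complex.exp (((-t^2*ξ^2/2 : ℝ) : ℂ)) := by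
    have hquad := integral_cexp_quadratic
      (by simpa using hb : (-(b:ℂ)).re < 0) (-(Complex.I*ξ)) 0
    simp only [add_zero] at hquad
    rw [hquad]
    congr 1
    · rw [neg_neg]
      have hb2 : (Real.pi : ℂ) / (b:ℂ) = ((2*Real.pi*t^2 : ℝ) : ℂ) := by
        push_cast [hbdef]
        field_simp
      rw [hb2, show ((1:ℂ)/2) = ((1/2 : ℝ) : ℂ) from by norm_num,
        ← Complex.ofReal_cpow (by positivity) (1/2 : ℝ)]
      norm_cast
      rw [← Real.sqrt_eq_rpow, Real.sqrt_mul (by positivity), Real.sqrt_sq ht.le]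
    · congr 1
      have : (-(Complex.I*ξ))^2 = -((ξ:ℂ))^2 := by
        rw [neg_pow, mul_pow, Complex.I_sq]; ring
      rw [this]
      push_cast [hbdef]
      field_simp
      ring
  rw [hJ0]
  have hc2 : (-(Complex.I*ξ))^2 = -((ξ:ℂ))^2 := by
    rw [neg_pow, mul_pow, Complex.I_sq]; ring
  rw [hc2, ← Complex.ofReal_exp]
  push_cast [hbdef]
  have h2t : (2:ℂ) * t^2 ≠ 0 := by simp [htC]
  field_simp
  ring

open Complex in
lemma mb_norm_exp (ξ x : ℝ) : ‖Complex.exp (-(Complex.I * ξ * x))‖ = 1 := by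
  rw [Complex.norm_exp]
  simp [Complex.mul_re]

theorem maxwell_boltzmann_fourier_transform
    (f : ℝ → ℝ)
    (hf_bdd : ∃ M : ℝ, ∀ x : ℝ, |f x| ≤ M)
    (hf_uc : UniformContinuous f)
    (hf_int : Integrable f)
    (t : ℝ) (ht : 0 < t) :
    ∀ ξ : ℝ, fourierXform (fun x => maxwellConv f t x) ξ =
      fourierXform f ξ * ((Real.exp (-t ^ 2 * ξ ^ 2 / 2) * (1 - t ^ 2 * ξ ^ 2) : ℝ) : ℂ) := by
  intro ξ
  have hf_cont : Continuous f := hf_uc.continuous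
  obtain ⟨M, hM⟩ := hf_bdd
  set K : ℝ → ℝ := fun v => v ^ 2 * Real.exp (-v ^ 2 / (2 * t ^ 2)) / t ^ 3 with hK
  have hK_cont : Continuous K := by fun_prop
  have hK_int : Integrable K := by
    have h2 : Integrable (fun v : ℝ => v^2 * Real.exp (-(1/(2*t^2)) * v^2)) := by
      simpa [Real.rpow_natCast _ 2] using
        integrable_rpow_mul_exp_neg_mul_sq (by positivity : (0:ℝ) < 1/(2*t^2))
          (s := (2:ℝ)) (by norm_num)
    apply (h2.div_const (t^3)).congr
    refine Filter.Eventually.of_forall fun v => ?_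
    rw [hK]
    ring_nf
  set F : ℝ × ℝ → ℂ := fun p =>
    (f (p.1 - p.2) : ℂ) * (K p.2 : ℂ) * Complex.exp (-(Complex.I * ξ * p.1)) with hF
  have hF_cont : Continuous F := by
    apply Continuous.mul
    apply Continuous.mul
    · exact Complex.continuous_ofReal.comp (hf_cont.comp (continuous_fst.sub continuous_snd))
    · exact Complex.continuous_ofReal.comp (hK_cont.comp continuous_snd)
    · exact Complex.continuous_exp.comp (by fun_prop)
  -- sections in x are integrable
  have hsec : ∀ v : ℝ, Integrable (fun x : ℝ => (f (x - v) : ℂ)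
      * Complex.exp (-(Complex.I * ξ * x))) := by
    intro v
    have h1 : Integrable (fun x : ℝ => ((f (x - v) : ℝ) : ℂ)) :=
      (hf_int.comp_sub_right v).ofReal
    have := h1.bdd_mul (f := fun x : ℝ => Complex.exp (-(Complex.I * ξ * x)))
      (Continuous.aestronglyMeasurable (by fun_prop)) (Filter.Eventually.of_forall fun x => le_of_eq (mb_norm_exp ξ x))
    exact this.congr (Filter.Eventually.of_forall fun x => mul_comm _ _)
  have hnorm : ∀ p : ℝ × ℝ, ‖F p‖ = |f (p.1 - p.2)| * |K p.2| := by
    intro p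
    rw [hF]
    simp only [norm_mul, Complex.norm_real, Real.norm_eq_abs, mb_norm_exp, mul_one]
  have hF_int : Integrable F (volume.prod volume) := by
    rw [MeasureTheory.integrable_prod_iff' hF_cont.aestronglyMeasurable]
    constructor
    · refine Filter.Eventually.of_forall fun v => ?_
      simpa [hF, mul_comm, mul_assoc, mul_left_comm] using ((hsec v).mul_const ((K v : ℝ) : ℂ))
    · apply Integrable.congr ((hK_int.abs.const_mul (∫ x, |f x|)))
      refine Filter.Eventually.of_forall fun v => ?_
      simp only
      rw [show (fun x => ‖F (x, v)‖) = fun x => |f (x - v)| * |K v| from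
        funext fun x => hnorm (x, v)]
      rw [integral_mul_const, integral_sub_right_eq_self (fun x => |f x|) v]
  -- main computation
  rw [fourierXform, fourierXform]
  have step1 : ∀ x : ℝ, ((maxwellConv f t x : ℝ) : ℂ) * Complex.exp (-(Complex.I * ξ * x))
      = (1 / (Real.sqrt (2 * Real.pi) : ℂ)) * ∫ v : ℝ, F (x, v) := by
    intro x
    rw [maxwellConv, Complex.ofReal_mul,
      show ((∫ v : ℝ, f (x - v) * (v ^ 2 * Real.exp (-v ^ 2 / (2 * t ^ 2)) / t ^ 3) : ℝ) : ℂ)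
        = ∫ v : ℝ, ((f (x - v) * (v ^ 2 * Real.exp (-v ^ 2 / (2 * t ^ 2)) / t ^ 3) : ℝ) : ℂ)
        from (integral_ofReal (𝕜 := ℂ)).symm]
    rw [mul_assoc, mul_comm _ (Complex.exp _), ← integral_const_mul]
    congr 1
    · push_cast; ring
    · refine integral_congr_ae (Filter.Eventually.of_forall fun v => ?_)
      rw [hF]
      simp only [hK, Complex.ofReal_mul, Complex.ofReal_div, Complex.ofReal_pow,
        Complex.ofReal_exp, Complex.ofReal_neg, Complex.ofReal_ofNat]
      ring
  simp_rw [step1]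
  rw [integral_const_mul]
  rw [MeasureTheory.integral_integral_swap hF_int]
  have step2 : ∀ v : ℝ, (∫ x : ℝ, F (x, v))
      = ((K v : ℝ) : ℂ) * Complex.exp (-(Complex.I * ξ * v))
        * ∫ x : ℝ, (f x : ℂ) * Complex.exp (-(Complex.I * ξ * x)) := by
    intro v
    have h1 : (∫ x : ℝ, F (x, v))
        = ((K v : ℝ) : ℂ) * ∫ x : ℝ, (f (x - v) : ℂ) * Complex.exp (-(Complex.I * ξ * x)) := by
      rw [← integral_const_mul]
      refine integral_congr_ae (Filter.Eventually.of_forall fun x => ?_)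
      rw [hF]; ring
    rw [h1]
    have h2 : (∫ x : ℝ, (f (x - v) : ℂ) * Complex.exp (-(Complex.I * ξ * x)))
        = ∫ x : ℝ, (f x : ℂ) * Complex.exp (-(Complex.I * ξ * (x + v))) := by
      rw [← integral_add_right_eq_self
        (fun x : ℝ => (f (x - v) : ℂ) * Complex.exp (-(Complex.I * ξ * x))) v]
      simp
    rw [h2]
    have h3 : ∀ x : ℝ, (f x : ℂ) * Complex.exp (-(Complex.I * ξ * ((x:ℂ) + (v:ℂ))))
        = Complex.exp (-(Complex.I * ξ * v)) * ((f x : ℂ)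
            * Complex.exp (-(Complex.I * ξ * x))) := by
      intro x
      rw [show -(Complex.I * ξ * ((x:ℂ) + (v:ℂ))) = -(Complex.I * ξ * v) + -(Complex.I * ξ * x)
        from by ring, Complex.exp_add]
      ring
    simp_rw [h3]
    rw [integral_const_mul]
    ring
  simp_rw [step2]
  rw [integral_mul_const]
  have hker : (∫ v : ℝ, ((K v : ℝ) : ℂ) * Complex.exp (-(Complex.I * ξ * v)))
      = (Real.sqrt (2 * Real.pi) : ℂ)
        * ((Real.exp (-t ^ 2 * ξ ^ 2 / 2) * (1 - t ^ 2 * ξ ^ 2) : ℝ) : ℂ) := by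
    rw [hK]
    exact mb_kernel_ft t ht ξ
  rw [hker]
  have hs : (Real.sqrt (2 * Real.pi) : ℂ) ≠ 0 := by
    simpa using Real.sqrt_ne_zero'.mpr (by positivity)
  have key : ∀ (S C R : ℂ), S ≠ 0 → 1/S * (1/S * (S * R * C)) = (1/S * C) * R := by
    intro S C R hS
    field_simp
  exact key _ _ _ hs
end

section
/- Suppose $f, f', f'', f''', f^{(4)} : \mathbb{R} \to \mathbb{R}$ exist, are bounded and uniformly continuous on $\mathbb{R}$, and $f$ is integrable. Then $u(x,t) := S_t(f)(x) = \frac{1}{\sqrt{2\pi}} \int_{-\infty}^{+\infty} f(x-v) \cdot \frac{v^2 e^{-v^2/(2t^2)}}{t^3}\, dv$ solves the initial value problem $\frac{\partial u}{\partial t}(x,t) = t^3 \frac{\partial^4 u}{\partial x^4}(x,t) - t^2 \frac{\partial^3 u}{\partial x^2 \partial t}(x,t) + 3t \frac{\partial^2 u}{\partial x^2}(x,t)$ for all $t > 0$, $x \in \mathbb{R}$, together with $\lim_{s \searrow 0} u(x,s) = f(x)$ for every $x \in \mathbb{R}$. -/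
open MeasureTheory Filter

open Real Topology

noncomputable def mbK (n : ℕ) (w : ℝ) : ℝ := w ^ n * Real.exp (-w ^ 2 / 2)

lemma mbK_cont (n : ℕ) : Continuous (mbK n) := by
  unfold mbK; continuity

lemma mbK_integrable (n : ℕ) : Integrable (mbK n) := by
  have h := integrable_rpow_mul_exp_neg_mul_sq (b := 1/2) (by norm_num)
      (s := (n : ℝ)) (lt_of_lt_of_le (by norm_num) (Nat.cast_nonneg n))
  refine h.congr (Filter.Eventually.of_forall fun x => ?_)
  show x ^ (n : ℝ) * Real.exp (-(1/2) * x ^ 2) = mbK n x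
  rw [Real.rpow_natCast]
  unfold mbK
  congr 1
  ring

lemma mb_integrable {h : ℝ → ℝ} (hc : Continuous h) (hM : ∃ M, ∀ z, |h z| ≤ M)
    (n : ℕ) (t x : ℝ) : Integrable (fun w => h (x - t * w) * mbK n w) := by
  obtain ⟨M, hM⟩ := hM
  exact (mbK_integrable n).bdd_mul
    ((hc.comp (by continuity)).aestronglyMeasurable)
    (Filter.Eventually.of_forall fun w => by simpa [Real.norm_eq_abs] using hM (x - t * w))

lemma mb_tendsto_atTop (m : ℕ) :
    Tendsto (fun w : ℝ => |w| ^ m * Real.exp (-w ^ 2 / 2)) atTop (𝓝 0) := by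
  have h3 : Tendsto (fun x : ℝ => Real.exp (-(1/2) * x)) atTop (𝓝 0) := by
    refine (Real.tendsto_exp_neg_atTop_nhds_zero.comp
      (Tendsto.const_mul_atTop (by norm_num : (0:ℝ) < 1/2) tendsto_id)).congr fun x => ?_
    simp [Function.comp]
  have h2 := (rpow_mul_exp_neg_mul_sq_isLittleO_exp_neg (b := 1/2) (by norm_num)
      (m : ℝ)).tendsto_zero_of_tendsto h3
  have h1 : Tendsto (fun w : ℝ => w ^ m * Real.exp (-(1/2) * w ^ 2)) atTop (𝓝 0) := by
    refine h2.congr fun x => ?_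
    show x ^ (m : ℝ) * _ = _
    rw [Real.rpow_natCast]
  refine h1.congr' ?_
  filter_upwards [eventually_ge_atTop (0:ℝ)] with w hw
  rw [abs_of_nonneg hw]
  congr 1
  ring

lemma mb_tendsto_atBot (m : ℕ) :
    Tendsto (fun w : ℝ => |w| ^ m * Real.exp (-w ^ 2 / 2)) atBot (𝓝 0) := by
  have := (mb_tendsto_atTop m).comp tendsto_neg_atBot_atTop
  refine this.congr fun x => ?_
  simp [Function.comp, abs_neg, neg_sq]

lemma mbG_hasDerivAt {h h' : ℝ → ℝ} (hh : ∀ z, HasDerivAt h (h' z) z)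
    (m : ℕ) (t x w : ℝ) :
    HasDerivAt (fun w => mbK m w * h (x - t * w))
      (((m : ℝ) * mbK (m - 1) w - mbK (m + 1) w) * h (x - t * w)
        + mbK m w * (h' (x - t * w) * (-t))) w := by
  have hinner : HasDerivAt (fun w : ℝ => -w ^ 2 / 2) (-w) w := by
    have := ((hasDerivAt_pow 2 w).neg.div_const 2)
    refine this.congr_deriv (Eq.symm ?_)
    push_cast; ring
  have hexp : HasDerivAt (fun w : ℝ => Real.exp (-w ^ 2 / 2))
      (Real.exp (-w ^ 2 / 2) * (-w)) w := by
    simpa [mul_comm] using hinner.exp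
  have hpow := hasDerivAt_pow m w
  have hK : HasDerivAt (mbK m)
      ((m : ℝ) * mbK (m - 1) w - mbK (m + 1) w) w := by
    have := hpow.mul hexp
    refine this.congr_deriv (Eq.symm ?_)
    unfold mbK
    rcases Nat.eq_zero_or_pos m with hm | hm
    · subst hm; simp; ring
    · have : m - 1 + 1 = m := Nat.succ_pred_eq_of_pos hm
      rw [← this]
      ring
  have hcomp : HasDerivAt (fun w : ℝ => h (x - t * w)) (h' (x - t * w) * (-t)) w := by
    have hlin : HasDerivAt (fun w : ℝ => x - t * w) (-t) w := by
      simpa using ((hasDerivAt_id w).const_mul t).const_sub x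
    simpa [Function.comp_def] using (hh (x - t * w)).comp w hlin
  exact hK.mul hcomp

lemma mb_parts {h h' : ℝ → ℝ} (hh : ∀ z, HasDerivAt h (h' z) z)
    (hc : Continuous h) (hc' : Continuous h')
    (hM : ∃ M, ∀ z, |h z| ≤ M) (hM' : ∃ M, ∀ z, |h' z| ≤ M)
    (m : ℕ) (t x : ℝ) :
    ∫ w : ℝ, h (x - t * w) * mbK (m + 1) w
      = (m : ℝ) * (∫ w : ℝ, h (x - t * w) * mbK (m - 1) w)
        - t * (∫ w : ℝ, h' (x - t * w) * mbK m w) := by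
  obtain ⟨M, hMb⟩ := hM
  set G' : ℝ → ℝ := fun w => ((m : ℝ) * mbK (m - 1) w - mbK (m + 1) w) * h (x - t * w)
        + mbK m w * (h' (x - t * w) * (-t)) with hG'
  have i1 : Integrable (fun w => h (x - t * w) * mbK (m - 1) w) :=
    mb_integrable hc ⟨M, hMb⟩ _ t x
  have i2 : Integrable (fun w => h (x - t * w) * mbK (m + 1) w) :=
    mb_integrable hc ⟨M, hMb⟩ _ t x
  have i3 : Integrable (fun w => h' (x - t * w) * mbK m w) :=
    mb_integrable hc' hM' _ t x
  have hGint : Integrable G' := by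
    have : Integrable (fun w => ((m : ℝ) * (h (x - t * w) * mbK (m - 1) w)
        - h (x - t * w) * mbK (m + 1) w) + (-t) * (h' (x - t * w) * mbK m w)) :=
      ((i1.const_mul _).sub i2).add (i3.const_mul _)
    refine this.congr (Filter.Eventually.of_forall fun w => ?_)
    rw [hG']; ring
  have htop : Tendsto (fun w => mbK m w * h (x - t * w)) atTop (𝓝 0) := by
    apply squeeze_zero_norm (a := fun w => M * (|w| ^ m * Real.exp (-w ^ 2 / 2)))
    · intro w
      rw [norm_mul]
      unfold mbK
      rw [Real.norm_eq_abs, Real.norm_eq_abs, abs_mul, abs_pow,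
        abs_of_pos (Real.exp_pos _)]
      calc |w| ^ m * Real.exp (-w ^ 2 / 2) * |h (x - t * w)|
          ≤ |w| ^ m * Real.exp (-w ^ 2 / 2) * M := by
            apply mul_le_mul_of_nonneg_left (hMb _) (by positivity)
        _ = M * (|w| ^ m * Real.exp (-w ^ 2 / 2)) := by ring
    · simpa using (mb_tendsto_atTop m).const_mul M
  have hbot : Tendsto (fun w => mbK m w * h (x - t * w)) atBot (𝓝 0) := by
    apply squeeze_zero_norm (a := fun w => M * (|w| ^ m * Real.exp (-w ^ 2 / 2)))
    · intro w
      rw [norm_mul]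
      unfold mbK
      rw [Real.norm_eq_abs, Real.norm_eq_abs, abs_mul, abs_pow,
        abs_of_pos (Real.exp_pos _)]
      calc |w| ^ m * Real.exp (-w ^ 2 / 2) * |h (x - t * w)|
          ≤ |w| ^ m * Real.exp (-w ^ 2 / 2) * M := by
            apply mul_le_mul_of_nonneg_left (hMb _) (by positivity)
        _ = M * (|w| ^ m * Real.exp (-w ^ 2 / 2)) := by ring
    · simpa using (mb_tendsto_atBot m).const_mul M
  have hzero : ∫ w, G' w = 0 := by
    have := integral_of_hasDerivAt_of_tendsto
      (f := fun w => mbK m w * h (x - t * w)) (f' := G')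
      (fun w => mbG_hasDerivAt hh m t x w) hGint hbot htop
    simpa using this
  have hsplit : ∫ w, G' w = (m : ℝ) * (∫ w, h (x - t * w) * mbK (m - 1) w)
      - (∫ w, h (x - t * w) * mbK (m + 1) w)
      - t * (∫ w, h' (x - t * w) * mbK m w) := by
    have heq : ∀ w, G' w = ((m : ℝ) * (h (x - t * w) * mbK (m - 1) w)
        - h (x - t * w) * mbK (m + 1) w) + (-t) * (h' (x - t * w) * mbK m w) := by
      intro w; rw [hG']; ring
    have i12 : Integrable (fun w => (m : ℝ) * (h (x - t * w) * mbK (m - 1) w)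
        - h (x - t * w) * mbK (m + 1) w) := (i1.const_mul _).sub i2
    have i3' : Integrable (fun w => (-t) * (h' (x - t * w) * mbK m w)) := i3.const_mul _
    rw [integral_congr_ae (Filter.Eventually.of_forall heq), integral_add i12 i3',
      integral_sub (i1.const_mul _) i2, integral_const_mul, integral_const_mul]
    ring
  rw [hsplit] at hzero
  linear_combination -hzero

lemma mb_hasDerivAt_x {h h' : ℝ → ℝ} (hh : ∀ z, HasDerivAt h (h' z) z)
    (hc : Continuous h) (hc' : Continuous h')
    (hM : ∃ M, ∀ z, |h z| ≤ M) (hM' : ∃ M, ∀ z, |h' z| ≤ M)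
    (n : ℕ) (t x : ℝ) :
    HasDerivAt (fun y => ∫ w : ℝ, h (y - t * w) * mbK n w)
      (∫ w : ℝ, h' (x - t * w) * mbK n w) x := by
  obtain ⟨M', hM'b⟩ := hM'
  have := hasDerivAt_integral_of_dominated_loc_of_deriv_le
    (F := fun y w => h (y - t * w) * mbK n w)
    (F' := fun y w => h' (y - t * w) * mbK n w)
    (bound := fun w => M' * ‖mbK n w‖) (x₀ := x) (Metric.ball_mem_nhds x zero_lt_one)
    (Filter.Eventually.of_forall fun y =>
      ((hc.comp (by continuity)).mul (mbK_cont n)).aestronglyMeasurable)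
    (mb_integrable hc hM n t x)
    ((hc'.comp (by continuity)).mul (mbK_cont n)).aestronglyMeasurable
    (Filter.Eventually.of_forall fun w y _ => by
      rw [norm_mul]
      exact mul_le_mul_of_nonneg_right
        (by simpa [Real.norm_eq_abs] using hM'b (y - t * w)) (norm_nonneg _))
    ((mbK_integrable n).norm.const_mul M')
    (Filter.Eventually.of_forall fun w y _ => by
      have hlin : HasDerivAt (fun y : ℝ => y - t * w) 1 y := by
        simpa using (hasDerivAt_id y).sub_const (t * w)
      have := ((hh (y - t * w)).comp y hlin).mul_const (mbK n w)
      simpa using this)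
  exact this.2

lemma mb_hasDerivAt_t {h h' : ℝ → ℝ} (hh : ∀ z, HasDerivAt h (h' z) z)
    (hc : Continuous h) (hc' : Continuous h')
    (hM : ∃ M, ∀ z, |h z| ≤ M) (hM' : ∃ M, ∀ z, |h' z| ≤ M)
    (n : ℕ) (t x : ℝ) :
    HasDerivAt (fun s => ∫ w : ℝ, h (x - s * w) * mbK n w)
      (-(∫ w : ℝ, h' (x - t * w) * mbK (n + 1) w)) t := by
  obtain ⟨M', hM'b⟩ := hM'
  have := hasDerivAt_integral_of_dominated_loc_of_deriv_le
    (F := fun s w => h (x - s * w) * mbK n w)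
    (F' := fun s w => -(h' (x - s * w) * mbK (n + 1) w))
    (bound := fun w => M' * ‖mbK (n + 1) w‖) (x₀ := t) (Metric.ball_mem_nhds t zero_lt_one)
    (Filter.Eventually.of_forall fun s =>
      ((hc.comp (by continuity)).mul (mbK_cont n)).aestronglyMeasurable)
    (mb_integrable hc hM n t x)
    (((hc'.comp (by continuity)).mul (mbK_cont (n + 1))).neg).aestronglyMeasurable
    (Filter.Eventually.of_forall fun w s _ => by
      rw [norm_neg, norm_mul]
      exact mul_le_mul_of_nonneg_right
        (by simpa [Real.norm_eq_abs] using hM'b (x - s * w)) (norm_nonneg _))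
    ((mbK_integrable (n + 1)).norm.const_mul M')
    (Filter.Eventually.of_forall fun w s _ => by
      have hlin : HasDerivAt (fun s : ℝ => x - s * w) (-w) s := by
        simpa using ((hasDerivAt_id s).mul_const w).const_sub x
      have := ((hh (x - s * w)).comp s hlin).mul_const (mbK n w)
      refine this.congr_deriv (Eq.symm ?_)
      unfold mbK
      ring)
  have h2 := this.2
  rwa [integral_neg] at h2

lemma mb_moment : (∫ w : ℝ, mbK 2 w) = Real.sqrt (2 * Real.pi) := by
  have hp := mb_parts (h := fun _ : ℝ => (1 : ℝ)) (h' := fun _ : ℝ => (0 : ℝ))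
    (fun z => hasDerivAt_const z 1) continuous_const continuous_const
    ⟨1, fun z => by norm_num⟩ ⟨0, fun z => by norm_num⟩ 1 0 0
  norm_num at hp
  rw [hp]
  have hg := integral_gaussian (1 / 2)
  have : (∫ w : ℝ, mbK 0 w) = ∫ x : ℝ, Real.exp (-(1 / 2) * x ^ 2) := by
    apply integral_congr_ae (Filter.Eventually.of_forall fun w => ?_)
    unfold mbK
    rw [pow_zero, one_mul]
    congr 1
    ring
  rw [this, hg]
  congr 1
  ring

lemma mb_key {f : ℝ → ℝ} (t : ℝ) (ht : 0 < t) (x : ℝ) :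
    maxwellConv f t x = (1 / Real.sqrt (2 * Real.pi)) *
      ∫ w : ℝ, f (x - t * w) * mbK 2 w := by
  unfold maxwellConv
  congr 1
  have h1 := MeasureTheory.Measure.integral_comp_mul_left
    (fun v => f (x - v) * (v ^ 2 * Real.exp (-v ^ 2 / (2 * t ^ 2)) / t ^ 3)) t
  rw [smul_eq_mul, abs_of_pos (inv_pos.mpr ht)] at h1
  have h2 : (∫ v : ℝ, f (x - v) * (v ^ 2 * Real.exp (-v ^ 2 / (2 * t ^ 2)) / t ^ 3))
      = t * ∫ w : ℝ, f (x - t * w) * ((t * w) ^ 2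
          * Real.exp (-(t * w) ^ 2 / (2 * t ^ 2)) / t ^ 3) := by
    rw [h1]
    field_simp
  rw [h2, ← integral_const_mul]
  apply integral_congr_ae (Filter.Eventually.of_forall fun w => ?_)
  have hexp : -(t * w) ^ 2 / (2 * t ^ 2) = -w ^ 2 / 2 := by
    field_simp
  rw [hexp]
  unfold mbK
  field_simp

noncomputable def mbJ (f : ℝ → ℝ) (k n : ℕ) (t x : ℝ) : ℝ :=
  ∫ w : ℝ, iteratedDeriv k f (x - t * w) * mbK n w

theorem maxwell_boltzmann_ivp
    (f : ℝ → ℝ)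
    (hf_diff : ∀ i < 4, Differentiable ℝ (iteratedDeriv i f))
    (hf_bdd : ∀ i ≤ 4, ∃ M : ℝ, ∀ x : ℝ, |iteratedDeriv i f x| ≤ M)
    (hf_uc : ∀ i ≤ 4, UniformContinuous (iteratedDeriv i f))
    (hf_int : Integrable f) :
    (∀ t > (0 : ℝ), ∀ x : ℝ,
        deriv (fun s => maxwellConv f s x) t =
          t ^ 3 * iteratedDeriv 4 (fun y => maxwellConv f t y) x -
            t ^ 2 * deriv (fun s => iteratedDeriv 2 (fun y => maxwellConv f s y) x) t +
            3 * t * iteratedDeriv 2 (fun y => maxwellConv f t y) x) ∧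
      (∀ x : ℝ, Tendsto (fun s : ℝ => maxwellConv f s x)
        (nhdsWithin 0 (Set.Ioi 0)) (nhds (f x))) := by
  have hsqrt_pos : 0 < Real.sqrt (2 * Real.pi) :=
    Real.sqrt_pos.mpr (by positivity)
  set c : ℝ := 1 / Real.sqrt (2 * Real.pi) with hc
  have hcont : ∀ k, k ≤ 4 → Continuous (iteratedDeriv k f) :=
    fun k hk => (hf_uc k hk).continuous
  have hder : ∀ k, k < 4 → ∀ z : ℝ,
      HasDerivAt (iteratedDeriv k f) (iteratedDeriv (k + 1) f z) z := by
    intro k hk z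
    rw [iteratedDeriv_succ]
    exact ((hf_diff k hk) z).hasDerivAt
  have hf_cont : Continuous f := by
    have := hcont 0 (by norm_num)
    rwa [iteratedDeriv_zero] at this
  obtain ⟨M₀, hM₀⟩ := hf_bdd 0 (by norm_num)
  rw [iteratedDeriv_zero] at hM₀
  -- the J integrals
  have hJ0 : ∀ t x : ℝ, mbJ f 0 2 t x = ∫ w : ℝ, f (x - t * w) * mbK 2 w := by
    intro t x
    unfold mbJ
    rw [iteratedDeriv_zero]
  have key : ∀ t : ℝ, 0 < t → ∀ x : ℝ, maxwellConv f t x = c * mbJ f 0 2 t x := by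
    intro t ht x
    rw [mb_key t ht x, hJ0]
  -- derivatives in x
  have hDx : ∀ k, k < 4 → ∀ (n : ℕ) (t x : ℝ),
      HasDerivAt (fun y => mbJ f k n t y) (mbJ f (k + 1) n t x) x := by
    intro k hk n t x
    exact mb_hasDerivAt_x (hder k hk) (hcont k (le_of_lt hk)) (hcont (k + 1) hk)
      (hf_bdd k (le_of_lt hk)) (hf_bdd (k + 1) hk) n t x
  -- derivatives in t
  have hDt : ∀ k, k < 4 → ∀ (n : ℕ) (t x : ℝ),
      HasDerivAt (fun s => mbJ f k n s x) (-(mbJ f (k + 1) (n + 1) t x)) t := by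
    intro k hk n t x
    exact mb_hasDerivAt_t (hder k hk) (hcont k (le_of_lt hk)) (hcont (k + 1) hk)
      (hf_bdd k (le_of_lt hk)) (hf_bdd (k + 1) hk) n t x
  -- spatial derivative chains
  have d1 : ∀ t : ℝ, deriv (fun y => c * mbJ f 0 2 t y) = fun y => c * mbJ f 1 2 t y :=
    fun t => funext fun y => ((hDx 0 (by norm_num) 2 t y).const_mul c).deriv
  have d2 : ∀ t : ℝ, deriv (fun y => c * mbJ f 1 2 t y) = fun y => c * mbJ f 2 2 t y :=
    fun t => funext fun y => ((hDx 1 (by norm_num) 2 t y).const_mul c).deriv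
  have d3 : ∀ t : ℝ, deriv (fun y => c * mbJ f 2 2 t y) = fun y => c * mbJ f 3 2 t y :=
    fun t => funext fun y => ((hDx 2 (by norm_num) 2 t y).const_mul c).deriv
  have e2 : ∀ t x' : ℝ, iteratedDeriv 2 (fun y => c * mbJ f 0 2 t y) x'
      = c * mbJ f 2 2 t x' := by
    intro t x'
    rw [show (2 : ℕ) = 1 + 1 from rfl, iteratedDeriv_succ, iteratedDeriv_one, d1 t]
    exact ((hDx 1 (by norm_num) 2 t x').const_mul c).deriv
  have e4 : ∀ t x' : ℝ, iteratedDeriv 4 (fun y => c * mbJ f 0 2 t y) x'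
      = c * mbJ f 4 2 t x' := by
    intro t x'
    rw [show (4 : ℕ) = 3 + 1 from rfl, iteratedDeriv_succ,
      show (3 : ℕ) = 2 + 1 from rfl, iteratedDeriv_succ,
      show (2 : ℕ) = 1 + 1 from rfl, iteratedDeriv_succ, iteratedDeriv_one,
      d1 t, d2 t, d3 t]
    exact ((hDx 3 (by norm_num) 2 t x').const_mul c).deriv
  have e2' : ∀ t : ℝ, 0 < t → ∀ x' : ℝ,
      iteratedDeriv 2 (fun y => maxwellConv f t y) x' = c * mbJ f 2 2 t x' := by
    intro t ht x'
    rw [show (fun y => maxwellConv f t y) = fun y => c * mbJ f 0 2 t y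
      from funext fun y => key t ht y]
    exact e2 t x'
  have e4' : ∀ t : ℝ, 0 < t → ∀ x' : ℝ,
      iteratedDeriv 4 (fun y => maxwellConv f t y) x' = c * mbJ f 4 2 t x' := by
    intro t ht x'
    rw [show (fun y => maxwellConv f t y) = fun y => c * mbJ f 0 2 t y
      from funext fun y => key t ht y]
    exact e4 t x'
  constructor
  · intro t ht x
    -- rewrite all four pieces
    have hev : (fun s => maxwellConv f s x) =ᶠ[nhds t] fun s => c * mbJ f 0 2 s x := by
      filter_upwards [Ioi_mem_nhds ht] with s hs
      exact key s hs x
    have hev3 : (fun s => iteratedDeriv 2 (fun y => maxwellConv f s y) x)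
        =ᶠ[nhds t] fun s => c * mbJ f 2 2 s x := by
      filter_upwards [Ioi_mem_nhds ht] with s hs
      exact e2' s hs x
    rw [hev.deriv_eq, ((hDt 0 (by norm_num) 2 t x).const_mul c).deriv,
      hev3.deriv_eq, ((hDt 2 (by norm_num) 2 t x).const_mul c).deriv,
      e2' t ht x, e4' t ht x]
    -- integration by parts identities
    have pa : mbJ f 1 3 t x = 2 * mbJ f 1 1 t x - t * mbJ f 2 2 t x := by
      exact_mod_cast mb_parts (hder 1 (by norm_num)) (hcont 1 (by norm_num))
        (hcont 2 (by norm_num)) (hf_bdd 1 (by norm_num)) (hf_bdd 2 (by norm_num)) 2 t x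
    have pb : mbJ f 1 1 t x = 0 * mbJ f 1 0 t x - t * mbJ f 2 0 t x := by
      exact_mod_cast mb_parts (hder 1 (by norm_num)) (hcont 1 (by norm_num))
        (hcont 2 (by norm_num)) (hf_bdd 1 (by norm_num)) (hf_bdd 2 (by norm_num)) 0 t x
    have pc : mbJ f 2 2 t x = 1 * mbJ f 2 0 t x - t * mbJ f 3 1 t x := by
      exact_mod_cast mb_parts (hder 2 (by norm_num)) (hcont 2 (by norm_num))
        (hcont 3 (by norm_num)) (hf_bdd 2 (by norm_num)) (hf_bdd 3 (by norm_num)) 1 t x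
    have pd : mbJ f 3 3 t x = 2 * mbJ f 3 1 t x - t * mbJ f 4 2 t x := by
      exact_mod_cast mb_parts (hder 3 (by norm_num)) (hcont 3 (by norm_num))
        (hcont 4 (by norm_num)) (hf_bdd 3 (by norm_num)) (hf_bdd 4 (by norm_num)) 2 t x
    linear_combination (-c) * pa + (-2 * c) * pb + (-2 * t * c) * pc + (-t ^ 2 * c) * pd
  · intro x
    have hdct := tendsto_integral_filter_of_dominated_convergence
      (μ := (volume : Measure ℝ)) (l := nhdsWithin (0 : ℝ) (Set.Ioi 0))
      (F := fun (s : ℝ) (w : ℝ) => f (x - s * w) * mbK 2 w)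
      (f := fun w => f x * mbK 2 w)
      (bound := fun w => M₀ * ‖mbK 2 w‖)
      (Filter.Eventually.of_forall fun s =>
        ((hf_cont.comp (by continuity)).mul (mbK_cont 2)).aestronglyMeasurable)
      (Filter.Eventually.of_forall fun s => Filter.Eventually.of_forall fun w => by
        rw [norm_mul]
        exact mul_le_mul_of_nonneg_right
          (by simpa [Real.norm_eq_abs] using hM₀ (x - s * w)) (norm_nonneg _))
      ((mbK_integrable 2).norm.const_mul M₀)
      (Filter.Eventually.of_forall fun w => by
        have h1 : Tendsto (fun s : ℝ => x - s * w) (nhds (0 : ℝ)) (nhds x) := by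
          have hcont2 : Continuous fun s : ℝ => x - s * w := by continuity
          simpa using hcont2.tendsto 0
        exact ((hf_cont.tendsto x).comp (h1.mono_left nhdsWithin_le_nhds)).mul_const _)
    have hval : c * ∫ w : ℝ, f x * mbK 2 w = f x := by
      rw [integral_const_mul, mb_moment, hc]
      field_simp
    have heq : (fun s : ℝ => c * ∫ w : ℝ, f (x - s * w) * mbK 2 w)
        =ᶠ[nhdsWithin (0 : ℝ) (Set.Ioi 0)] fun s => maxwellConv f s x := by
      filter_upwards [self_mem_nhdsWithin] with s hs
      rw [key s hs x, hJ0]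
    have hfin := (hdct.const_mul c).congr' heq
    rw [hval] at hfin
    exact hfin
end
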